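/- arXiv:1302.0480 — 2 statements merged into one kernel-verified Lean document; each statement's English description precedes it below -/
import Mathlib

section
/- In the discrete Snell envelope setting, for 0 ≤ n ≤ K-1 define y_n = E[ ȳ_{n+1} | G_n ] (the value when stopping before time n+1 is forbidden). Then y_n = ess sup over stopping times N with n+1 ≤ N ≤ K of E[ S̄_N 1_{N<K} + ξ̄ 1_{N=K} | G_n ], and the stopping time N*_{n+1} = min{ N ≥ n+1 : ȳ_N ≤ S̄_N } ∧ K is optimal. -/
open MeasureTheory

theorem isST_nat_le {Ω : Type*} {m0 : MeasurableSpace Ω} {𝒢 : Filtration ℕ m0} {τ : Ω → ℕ}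
    (hτ : IsStoppingTime 𝒢 (fun ω => (τ ω : WithTop ℕ))) (m : ℕ) :
    MeasurableSet[𝒢 m] {ω | τ ω ≤ m} := by
  simpa using hτ m

theorem isST_nat_eq {Ω : Type*} {m0 : MeasurableSpace Ω} {𝒢 : Filtration ℕ m0} {τ : Ω → ℕ}
    (hτ : IsStoppingTime 𝒢 (fun ω => (τ ω : WithTop ℕ))) (m : ℕ) :
    MeasurableSet[𝒢 m] {ω | τ ω = m} := by
  simpa using hτ.measurableSet_eq m

theorem isST_nat_lt {Ω : Type*} {m0 : MeasurableSpace Ω} {𝒢 : Filtration ℕ m0} {τ : Ω → ℕ}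
    (hτ : IsStoppingTime 𝒢 (fun ω => (τ ω : WithTop ℕ))) (m : ℕ) :
    MeasurableSet[𝒢 m] {ω | τ ω < m} := by
  simpa using hτ.measurableSet_lt_of_countable m

theorem isST_nat_min_const {Ω : Type*} {m0 : MeasurableSpace Ω} {𝒢 : Filtration ℕ m0}
    {τ : Ω → ℕ} (hτ : IsStoppingTime 𝒢 (fun ω => (τ ω : WithTop ℕ))) (m : ℕ) :
    IsStoppingTime 𝒢 (fun ω => ((min (τ ω) m : ℕ) : WithTop ℕ)) := by
  have h : (fun ω => ((min (τ ω) m : ℕ) : WithTop ℕ)) = fun ω => min (τ ω : WithTop ℕ) m := by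
    funext ω
    rcases le_total (τ ω) m with h | h
    · rw [min_eq_left h]
      exact (min_eq_left (by exact_mod_cast h)).symm
    · rw [min_eq_right h]
      exact (min_eq_right (by exact_mod_cast h)).symm
  rw [h]
  exact hτ.min_const m

theorem isST_nat_of {Ω : Type*} {m0 : MeasurableSpace Ω} {𝒢 : Filtration ℕ m0} {τ : Ω → ℕ}
    (h : ∀ m : ℕ, MeasurableSet[𝒢 m] {ω | τ ω ≤ m}) :
    IsStoppingTime 𝒢 (fun ω => (τ ω : WithTop ℕ)) := fun m => by
  simpa using h m

/-- Optimal stopping with stopping at the initial time forbidden: the value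
`y_n := E[ȳ_{n+1}|G_n]` is the essential supremum of `E[S̄_N 1_{N<K} + ξ̄ 1_{N=K}|G_n]`
over stopping times `n+1 ≤ N ≤ K`, and the first hitting time
`N*_{n+1} = min{m ≥ n+1 : ȳ_m ≤ S̄_m} ∧ K` is optimal. -/
theorem discrete_snell_no_immediate_stopping
    {Ω : Type*} {m0 : MeasurableSpace Ω} (μ : Measure Ω) [IsProbabilityMeasure μ]
    (𝒢 : Filtration ℕ m0) (K : ℕ)
    (Sb : ℕ → Ω → ℝ) (hSadp : ∀ n, StronglyMeasurable[𝒢 n] (Sb n))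
    (hSint : ∀ n, Integrable (Sb n) μ)
    (ξ : Ω → ℝ) (hξm : StronglyMeasurable[𝒢 K] ξ) (hξint : Integrable ξ μ)
    (y : ℕ → Ω → ℝ)
    (hyK : y K = ξ)
    (hyadp : ∀ n, StronglyMeasurable[𝒢 n] (y n)) (hyint : ∀ n, Integrable (y n) μ)
    (hyrec : ∀ n < K, y n =ᵐ[μ] fun ω => max (Sb n ω) ((μ[y (n + 1)|𝒢 n]) ω))
    (n : ℕ) (hn : n + 1 ≤ K)
    (Nstar : Ω → ℕ)
    (hNstar : ∀ ω, Nstar ω = sInf ({m | n + 1 ≤ m ∧ y m ω ≤ Sb m ω} ∪ {K})) :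
    (∀ N : Ω → ℕ, IsStoppingTime 𝒢 (fun ω => (N ω : WithTop ℕ)) → (∀ ω, n + 1 ≤ N ω ∧ N ω ≤ K) →
        (μ[fun ω => (if N ω < K then Sb (N ω) ω else ξ ω)|𝒢 n]) ≤ᵐ[μ] μ[y (n + 1)|𝒢 n])
    ∧ IsStoppingTime 𝒢 (fun ω => (Nstar ω : WithTop ℕ)) ∧ (∀ ω, n + 1 ≤ Nstar ω ∧ Nstar ω ≤ K)
    ∧ (μ[y (n + 1)|𝒢 n])
        =ᵐ[μ] μ[fun ω => (if Nstar ω < K then Sb (Nstar ω) ω else ξ ω)|𝒢 n] := by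
  classical
  -- simultaneous a.e. recursion
  have hrec_ae : ∀ᵐ ω ∂μ, ∀ j, j < K → y j ω = max (Sb j ω) ((μ[y (j + 1)|𝒢 j]) ω) := by
    rw [ae_all_iff]
    intro j
    by_cases hj : j < K
    · filter_upwards [hyrec j hj] with ω h _ using h
    · filter_upwards with ω h using absurd h hj
  -- Nstar membership and bounds
  have hNmem : ∀ ω, Nstar ω ∈ ({m | n + 1 ≤ m ∧ y m ω ≤ Sb m ω} ∪ {K} : Set ℕ) := fun ω => by
    rw [hNstar ω]
    exact Nat.sInf_mem ⟨K, Or.inr rfl⟩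
  have hNb : ∀ ω, n + 1 ≤ Nstar ω ∧ Nstar ω ≤ K := by
    intro ω
    constructor
    · rcases hNmem ω with h | h
      · exact h.1
      · rw [Set.mem_singleton_iff] at h; omega
    · rw [hNstar ω]
      exact Nat.sInf_le (Or.inr rfl)
  have hNst : IsStoppingTime 𝒢 (fun ω => (Nstar ω : WithTop ℕ)) := by
    refine isST_nat_of (fun m => ?_)
    have hset : {ω | Nstar ω ≤ m} =
        {ω : Ω | K ≤ m} ∪ ⋃ j ∈ Finset.Icc (n + 1) m, {ω | y j ω ≤ Sb j ω} := by
      ext ω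
      simp only [Set.mem_setOf_eq, Set.mem_union, Set.mem_iUnion, Finset.mem_coe,
        Finset.mem_Icc, exists_prop]
      constructor
      · intro h
        rcases hNmem ω with hm | hm
        · exact Or.inr ⟨Nstar ω, ⟨hm.1, h⟩, hm.2⟩
        · rw [Set.mem_singleton_iff] at hm
          exact Or.inl (hm ▸ h)
      · rintro (h | ⟨j, ⟨hj1, hj2⟩, hj3⟩)
        · exact le_trans (hNb ω).2 h
        · refine le_trans ?_ hj2
          rw [hNstar ω]
          exact Nat.sInf_le (Or.inl ⟨hj1, hj3⟩)
    rw [hset]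
    refine (MeasurableSet.const _).union ?_
    refine MeasurableSet.biUnion (Finset.Icc (n + 1) m).countable_toSet fun j hj => ?_
    have hjm : j ≤ m := (Finset.mem_Icc.mp (Finset.mem_coe.mp hj)).2
    exact 𝒢.mono hjm _ ((hyadp j).measurableSet_le (hSadp j))
  -- measurability of level sets of stopping times (ambient σ-algebra)
  have hmeasEq : ∀ τ : Ω → ℕ, IsStoppingTime 𝒢 (fun ω => (τ ω : WithTop ℕ)) → ∀ j, MeasurableSet {ω | τ ω = j} :=
    fun τ hτ j => 𝒢.le j _ (isST_nat_eq hτ j)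
  -- writing a stopped value as a finite sum
  have hsum : ∀ (τ : Ω → ℕ) (m : ℕ), (∀ ω, τ ω ≤ m) →
      (fun ω => y (τ ω) ω) = ∑ j ∈ Finset.range (m + 1), Set.indicator {ω | τ ω = j} (y j) := by
    intro τ m hτ
    funext ω
    simp only [Finset.sum_apply]
    rw [Finset.sum_eq_single (τ ω)]
    · exact (Set.indicator_of_mem (show ω ∈ {ω' | τ ω' = τ ω} from rfl) _).symm
    · intro j _ hj
      exact Set.indicator_of_notMem (fun h => hj ((Set.mem_setOf_eq ▸ h).symm)) _
    · intro h
      exact absurd (Finset.mem_range.mpr (Nat.lt_succ_of_le (hτ ω))) h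
  have hFint : ∀ τ : Ω → ℕ, IsStoppingTime 𝒢 (fun ω => (τ ω : WithTop ℕ)) → (∀ ω, τ ω ≤ K) →
      Integrable (fun ω => y (τ ω) ω) μ := by
    intro τ hτ hτK
    rw [hsum τ K hτK]
    exact integrable_finset_sum' _ fun j _ => (hyint j).indicator (hmeasEq τ hτ j)
  have hFmeas : ∀ τ : Ω → ℕ, IsStoppingTime 𝒢 (fun ω => (τ ω : WithTop ℕ)) → ∀ m : ℕ,
      StronglyMeasurable[𝒢 m] (fun ω => y (min (τ ω) m) ω) := by
    intro τ hτ m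
    have h1 : (fun ω => y (min (τ ω) m) ω) =
        ∑ j ∈ Finset.range (m + 1), Set.indicator {ω | min (τ ω) m = j} (y j) :=
      hsum (fun ω => min (τ ω) m) m fun ω => min_le_right _ _
    rw [h1]
    refine Finset.stronglyMeasurable_sum _ fun j hj => ?_
    have hjm : j ≤ m := Nat.lt_succ_iff.mp (Finset.mem_range.mp hj)
    refine ((hyadp j).mono (𝒢.mono hjm)).indicator ?_
    by_cases hjm' : j < m
    · have h2 : {ω | min (τ ω) m = j} = {ω | τ ω = j} := by
        ext ω
        simp only [Set.mem_setOf_eq, Nat.min_def]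
        split_ifs with h <;> omega
      rw [h2]
      exact 𝒢.mono hjm _ (isST_nat_eq hτ j)
    · have h2 : {ω | min (τ ω) m = j} = {ω | τ ω < m}ᶜ := by
        ext ω
        simp only [Set.mem_setOf_eq, Set.mem_compl_iff, Nat.min_def]
        split_ifs with h <;> omega
      rw [h2]
      exact (isST_nat_lt hτ m).compl
  -- decomposition of the stopped value at time m
  have hFmdec : ∀ (τ : Ω → ℕ) (m : ℕ), (fun ω => y (min (τ ω) m) ω) =
      Set.indicator {ω | τ ω ≤ m} (fun ω => y (min (τ ω) m) ω)
        + Set.indicator {ω | m + 1 ≤ τ ω} (y m) := by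
    intro τ m
    funext ω
    simp only [Pi.add_apply, Set.indicator_apply, Set.mem_setOf_eq]
    by_cases h : τ ω ≤ m
    · rw [if_pos h, if_neg (by omega), add_zero]
    · rw [if_neg h, if_pos (by omega), zero_add, min_eq_right (by omega)]
  -- one-step computation of the conditional expectation of a stopped value
  have hstep : ∀ τ : Ω → ℕ, ∀ hτ : IsStoppingTime 𝒢 (fun ω => (τ ω : WithTop ℕ)), (∀ ω, τ ω ≤ K) → ∀ m : ℕ, m < K →
      μ[(fun ω => y (min (τ ω) (m + 1)) ω)|𝒢 m] =ᵐ[μ]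
        Set.indicator {ω | τ ω ≤ m} (fun ω => y (min (τ ω) m) ω)
          + Set.indicator {ω | m + 1 ≤ τ ω} (μ[y (m + 1)|𝒢 m]) := by
    intro τ hτ hτK m hm
    have hGm : StronglyMeasurable[𝒢 m]
        (Set.indicator {ω | τ ω ≤ m} (fun ω => y (min (τ ω) m) ω)) :=
      (hFmeas τ hτ m).indicator (isST_nat_le hτ m)
    have hsetc : MeasurableSet[𝒢 m] {ω | m + 1 ≤ τ ω} := by
      have h2 : {ω | m + 1 ≤ τ ω} = {ω | τ ω ≤ m}ᶜ := by
        ext ω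
        simp only [Set.mem_setOf_eq, Set.mem_compl_iff]
        omega
      rw [h2]
      exact (isST_nat_le hτ m).compl
    have hGint : Integrable
        (Set.indicator {ω | τ ω ≤ m} (fun ω => y (min (τ ω) m) ω)) μ := by
      refine Integrable.indicator ?_ (𝒢.le m _ (isST_nat_le hτ m))
      exact hFint (fun ω => min (τ ω) m) (isST_nat_min_const hτ m)
        fun ω => le_trans (min_le_right _ _) (le_of_lt hm)
    have hIint : Integrable (Set.indicator {ω | m + 1 ≤ τ ω} (y (m + 1))) μ :=
      (hyint (m + 1)).indicator (𝒢.le m _ hsetc)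
    have hdecpt : (fun ω => y (min (τ ω) (m + 1)) ω) =
        Set.indicator {ω | τ ω ≤ m} (fun ω => y (min (τ ω) m) ω)
          + Set.indicator {ω | m + 1 ≤ τ ω} (y (m + 1)) := by
      funext ω
      simp only [Pi.add_apply, Set.indicator_apply, Set.mem_setOf_eq]
      by_cases h : τ ω ≤ m
      · rw [if_pos h, if_neg (by omega), add_zero, min_eq_left (by omega),
          min_eq_left (by omega)]
      · rw [if_neg h, if_pos (by omega), zero_add, min_eq_right (by omega)]
    calc μ[(fun ω => y (min (τ ω) (m + 1)) ω)|𝒢 m]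
        = μ[Set.indicator {ω | τ ω ≤ m} (fun ω => y (min (τ ω) m) ω)
            + Set.indicator {ω | m + 1 ≤ τ ω} (y (m + 1))|𝒢 m] := by rw [hdecpt]
      _ =ᵐ[μ] μ[Set.indicator {ω | τ ω ≤ m} (fun ω => y (min (τ ω) m) ω)|𝒢 m]
            + μ[Set.indicator {ω | m + 1 ≤ τ ω} (y (m + 1))|𝒢 m] :=
        condExp_add hGint hIint _
      _ =ᵐ[μ] Set.indicator {ω | τ ω ≤ m} (fun ω => y (min (τ ω) m) ω)
            + Set.indicator {ω | m + 1 ≤ τ ω} (μ[y (m + 1)|𝒢 m]) := by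
        refine Filter.EventuallyEq.add ?_ (condExp_indicator (hyint (m + 1)) hsetc)
        rw [condExp_of_stronglyMeasurable (𝒢.le m) hGm hGint]
  -- backward induction: inequality for a general stopping time
  have hkey_le : ∀ τ : Ω → ℕ, ∀ hτ : IsStoppingTime 𝒢 (fun ω => (τ ω : WithTop ℕ)), (∀ ω, n + 1 ≤ τ ω ∧ τ ω ≤ K) →
      ∀ d m : ℕ, m + d = K → n + 1 ≤ m →
      μ[(fun ω => y (min (τ ω) K) ω)|𝒢 m] ≤ᵐ[μ] fun ω => y (min (τ ω) m) ω := by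
    intro τ hτ hτb d
    induction d with
    | zero =>
      intro m hm _
      have hmK : m = K := by omega
      subst hmK
      rw [condExp_of_stronglyMeasurable (𝒢.le m) (hFmeas τ hτ m)
        (hFint (fun ω => min (τ ω) m) (isST_nat_min_const hτ m) fun ω => min_le_right _ _)]
    | succ d ih =>
      intro m hm hm1
      have hmK : m < K := by omega
      have ihm := ih (m + 1) (by omega) (by omega)
      have h1 : μ[(fun ω => y (min (τ ω) K) ω)|𝒢 m]
          =ᵐ[μ] μ[μ[(fun ω => y (min (τ ω) K) ω)|𝒢 (m + 1)]|𝒢 m] :=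
        (condExp_condExp_of_le (𝒢.mono (Nat.le_succ m)) (𝒢.le (m + 1))).symm
      have h2 : μ[μ[(fun ω => y (min (τ ω) K) ω)|𝒢 (m + 1)]|𝒢 m]
          ≤ᵐ[μ] μ[(fun ω => y (min (τ ω) (m + 1)) ω)|𝒢 m] :=
        condExp_mono integrable_condExp
          (hFint (fun ω => min (τ ω) (m + 1)) (isST_nat_min_const hτ (m + 1))
            fun ω => le_trans (min_le_right _ _) (by omega)) ihm
      have h3 := hstep τ hτ (fun ω => (hτb ω).2) m hmK
      have h4 : Set.indicator {ω | τ ω ≤ m} (fun ω => y (min (τ ω) m) ω)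
            + Set.indicator {ω | m + 1 ≤ τ ω} (μ[y (m + 1)|𝒢 m])
          ≤ᵐ[μ] Set.indicator {ω | τ ω ≤ m} (fun ω => y (min (τ ω) m) ω)
            + Set.indicator {ω | m + 1 ≤ τ ω} (y m) := by
        filter_upwards [hyrec m hmK] with ω hy
        simp only [Pi.add_apply]
        refine add_le_add le_rfl ?_
        by_cases hmem : ω ∈ {ω | m + 1 ≤ τ ω}
        · rw [Set.indicator_of_mem hmem, Set.indicator_of_mem hmem, hy]
          exact le_max_right _ _
        · rw [Set.indicator_of_notMem hmem, Set.indicator_of_notMem hmem]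
      have h5 := ((h1.le.trans h2).trans h3.le).trans h4
      rw [hFmdec τ m]
      exact h5
  -- backward induction: equality for the hitting time Nstar
  have hopt : ∀ m, n + 1 ≤ m → m < K →
      ∀ᵐ ω ∂μ, m + 1 ≤ Nstar ω → (μ[y (m + 1)|𝒢 m]) ω = y m ω := by
    intro m hm1 hmK
    filter_upwards [hyrec m hmK] with ω hy hge
    have hnot : ¬ y m ω ≤ Sb m ω := by
      intro hle
      have h2 : Nstar ω ≤ m := by
        rw [hNstar ω]
        exact Nat.sInf_le (Or.inl ⟨hm1, hle⟩)
      omega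
    rcases max_choice (Sb m ω) ((μ[y (m + 1)|𝒢 m]) ω) with h | h
    · exact absurd (le_of_eq (hy.trans h)) hnot
    · exact (hy.trans h).symm
  have hkey_eq : ∀ d m : ℕ, m + d = K → n + 1 ≤ m →
      μ[(fun ω => y (min (Nstar ω) K) ω)|𝒢 m] =ᵐ[μ] fun ω => y (min (Nstar ω) m) ω := by
    intro d
    induction d with
    | zero =>
      intro m hm _
      have hmK : m = K := by omega
      subst hmK
      rw [condExp_of_stronglyMeasurable (𝒢.le m) (hFmeas Nstar hNst m)
        (hFint (fun ω => min (Nstar ω) m) (isST_nat_min_const hNst m) fun ω => min_le_right _ _)]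
    | succ d ih =>
      intro m hm hm1
      have hmK : m < K := by omega
      have ihm := ih (m + 1) (by omega) (by omega)
      have h1 : μ[(fun ω => y (min (Nstar ω) K) ω)|𝒢 m]
          =ᵐ[μ] μ[μ[(fun ω => y (min (Nstar ω) K) ω)|𝒢 (m + 1)]|𝒢 m] :=
        (condExp_condExp_of_le (𝒢.mono (Nat.le_succ m)) (𝒢.le (m + 1))).symm
      have h2 : μ[μ[(fun ω => y (min (Nstar ω) K) ω)|𝒢 (m + 1)]|𝒢 m]
          =ᵐ[μ] μ[(fun ω => y (min (Nstar ω) (m + 1)) ω)|𝒢 m] :=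
        condExp_congr_ae ihm
      have h3 := hstep Nstar hNst (fun ω => (hNb ω).2) m hmK
      have h4 : Set.indicator {ω | Nstar ω ≤ m} (fun ω => y (min (Nstar ω) m) ω)
            + Set.indicator {ω | m + 1 ≤ Nstar ω} (μ[y (m + 1)|𝒢 m])
          =ᵐ[μ] Set.indicator {ω | Nstar ω ≤ m} (fun ω => y (min (Nstar ω) m) ω)
            + Set.indicator {ω | m + 1 ≤ Nstar ω} (y m) := by
        filter_upwards [hopt m hm1 hmK] with ω hω
        simp only [Pi.add_apply]
        congr 1
        by_cases hmem : ω ∈ {ω | m + 1 ≤ Nstar ω}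
        · rw [Set.indicator_of_mem hmem, Set.indicator_of_mem hmem]
          exact hω hmem
        · rw [Set.indicator_of_notMem hmem, Set.indicator_of_notMem hmem]
      have h5 := ((h1.trans h2).trans h3).trans h4
      rw [hFmdec Nstar m]
      exact h5
  -- integrability of the payoff
  have hpayint : ∀ τ : Ω → ℕ, IsStoppingTime 𝒢 (fun ω => (τ ω : WithTop ℕ)) → (∀ ω, τ ω ≤ K) →
      Integrable (fun ω => if τ ω < K then Sb (τ ω) ω else ξ ω) μ := by
    intro τ hτ hτK
    have h1 : (fun ω => if τ ω < K then Sb (τ ω) ω else ξ ω) =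
        ∑ j ∈ Finset.range (K + 1), Set.indicator {ω | τ ω = j}
          (fun ω => if j < K then Sb j ω else ξ ω) := by
      funext ω
      simp only [Finset.sum_apply]
      rw [Finset.sum_eq_single (τ ω)]
      · exact (Set.indicator_of_mem (show ω ∈ {ω' | τ ω' = τ ω} from rfl)
          (fun ω' => if τ ω < K then Sb (τ ω) ω' else ξ ω')).symm
      · intro j _ hj
        exact Set.indicator_of_notMem (fun h => hj ((Set.mem_setOf_eq ▸ h).symm)) _
      · intro h
        exact absurd (Finset.mem_range.mpr (Nat.lt_succ_of_le (hτK ω))) h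
    rw [h1]
    refine integrable_finset_sum' _ fun j _ => Integrable.indicator ?_ (hmeasEq τ hτ j)
    by_cases hj : j < K
    · simpa only [if_pos hj] using hSint j
    · simpa only [if_neg hj] using hξint
  refine ⟨?_, hNst, hNb, ?_⟩
  · -- the essential supremum bound
    intro N hN hNb'
    have hNK : ∀ ω, N ω ≤ K := fun ω => (hNb' ω).2
    have h0 : (fun ω => if N ω < K then Sb (N ω) ω else ξ ω)
        ≤ᵐ[μ] fun ω => y (min (N ω) K) ω := by
      filter_upwards [hrec_ae] with ω hr
      by_cases h : N ω < K
      · rw [if_pos h, min_eq_left (hNK ω)]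
        calc Sb (N ω) ω ≤ max (Sb (N ω) ω) ((μ[y (N ω + 1)|𝒢 (N ω)]) ω) := le_max_left _ _
          _ = y (N ω) ω := (hr (N ω) h).symm
      · have hNKe : N ω = K := by have := hNK ω; omega
        rw [if_neg h, min_eq_left (hNK ω), hNKe, hyK]
    have hA : μ[(fun ω => if N ω < K then Sb (N ω) ω else ξ ω)|𝒢 n]
        ≤ᵐ[μ] μ[(fun ω => y (min (N ω) K) ω)|𝒢 n] :=
      condExp_mono (hpayint N hN hNK)
        (hFint (fun ω => min (N ω) K) (isST_nat_min_const hN K) fun ω => min_le_right _ _) h0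
    have hB : μ[(fun ω => y (min (N ω) K) ω)|𝒢 n]
        =ᵐ[μ] μ[μ[(fun ω => y (min (N ω) K) ω)|𝒢 (n + 1)]|𝒢 n] :=
      (condExp_condExp_of_le (𝒢.mono (Nat.le_succ n)) (𝒢.le (n + 1))).symm
    have hC := hkey_le N hN hNb' (K - (n + 1)) (n + 1) (by omega) le_rfl
    have hmin : (fun ω => y (min (N ω) (n + 1)) ω) = y (n + 1) := by
      funext ω
      rw [min_eq_right (hNb' ω).1]
    rw [hmin] at hC
    have hD : μ[μ[(fun ω => y (min (N ω) K) ω)|𝒢 (n + 1)]|𝒢 n]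
        ≤ᵐ[μ] μ[y (n + 1)|𝒢 n] :=
      condExp_mono integrable_condExp (hyint (n + 1)) hC
    exact hA.trans (hB.le.trans hD)
  · -- optimality of Nstar
    have hpayEq : (fun ω => if Nstar ω < K then Sb (Nstar ω) ω else ξ ω)
        =ᵐ[μ] fun ω => y (min (Nstar ω) K) ω := by
      filter_upwards [hrec_ae] with ω hr
      by_cases h : Nstar ω < K
      · rw [if_pos h, min_eq_left (hNb ω).2]
        have hmem : Nstar ω ∈ {m | n + 1 ≤ m ∧ y m ω ≤ Sb m ω} := by
          rcases hNmem ω with h' | h'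
          · exact h'
          · rw [Set.mem_singleton_iff] at h'; omega
        have hge : Sb (Nstar ω) ω ≤ y (Nstar ω) ω := by
          rw [hr (Nstar ω) h]
          exact le_max_left _ _
        exact le_antisymm hge hmem.2
      · have hNKe : Nstar ω = K := by
          have := (hNb ω).2; omega
        rw [if_neg h, min_eq_left (hNb ω).2, hNKe, hyK]
    have hC := hkey_eq (K - (n + 1)) (n + 1) (by omega) le_rfl
    have hmin : (fun ω => y (min (Nstar ω) (n + 1)) ω) = y (n + 1) := by
      funext ω
      rw [min_eq_right (hNb ω).1]
    rw [hmin] at hC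
    calc μ[y (n + 1)|𝒢 n]
        =ᵐ[μ] μ[μ[(fun ω => y (min (Nstar ω) K) ω)|𝒢 (n + 1)]|𝒢 n] :=
          (condExp_congr_ae hC).symm
      _ =ᵐ[μ] μ[(fun ω => y (min (Nstar ω) K) ω)|𝒢 n] :=
          condExp_condExp_of_le (𝒢.mono (Nat.le_succ n)) (𝒢.le (n + 1))
      _ =ᵐ[μ] μ[(fun ω => if Nstar ω < K then Sb (Nstar ω) ω else ξ ω)|𝒢 n] :=
          condExp_congr_ae hpayEq.symm
end

section
/- Let (G_n)_{0 ≤ n ≤ K} be a discrete filtration, and for each regime i ∈ {1,…,d} let (Y^i_n) be adapted integrable processes satisfying the coupled recursion Y^i_n = E[ F^i_n + max{ M^i_{n+1}, Y^i_{n+1} } 1_{n+1 ≤ K-1} + ξ^i 1_{n+1 = K} | G_n ] where M^i_{n+1} = max_{j ≠ i} ( Y^j_{n+1} − C^{ij}_{n+1} ). Then Y^i_n equals the value of the discrete optimal switching problem starting from regime i at time n: Y^i_n = ess sup over admissible switching strategies u (adapted sequences of regimes starting at i, switching only at times n+1,…,K-1) of E[ ∑_m F^{u_m}_m + ξ^{u_K}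 − ∑ of switching costs C^{α_{k-1},α_k} at switching times | G_n ]. -/
open MeasureTheory

section Helpers
variable {Ω : Type*} {ι : Type*} [Fintype ι] [MeasurableSpace ι]
  [MeasurableSingletonClass ι]

omit [MeasurableSpace ι] [MeasurableSingletonClass ι] in
lemma osr_comp_eq_sum (g : ι → Ω → ℝ) (v : Ω → ι) :
    (fun ω => g (v ω) ω) = fun ω => ∑ j, Set.indicator {ω' | v ω' = j} (g j) ω := by
  classical
  funext ω
  rw [Finset.sum_eq_single (v ω)]
  · simp [Set.indicator_apply]
  · intro j _ hj
    simp [Set.indicator_apply, fun h : v ω = j => hj h.symm]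
    intro h; exact absurd h.symm hj
  · simp

/-- Measurability of pointwise selection. -/
lemma osr_measurable_comp {m : MeasurableSpace Ω} {β : Type*} [MeasurableSpace β]
    (g : ι → Ω → β) (v : Ω → ι)
    (hg : ∀ j, Measurable[m] (g j)) (hv : Measurable[m] v) :
    Measurable[m] fun ω => g (v ω) ω := by
  classical
  have : Countable ι := Finite.to_countable
  intro B hB
  have : (fun ω => g (v ω) ω) ⁻¹' B = ⋃ j, ({ω | v ω = j} ∩ (g j ⁻¹' B)) := by
    ext ω; simp only [Set.mem_preimage, Set.mem_iUnion, Set.mem_inter_iff, Set.mem_setOf_eq]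
    constructor
    · intro h; exact ⟨v ω, rfl, h⟩
    · rintro ⟨j, hj, h⟩; rwa [hj]
  rw [this]
  exact MeasurableSet.iUnion fun j =>
    ((hv (measurableSet_singleton j)).inter (hg j hB))

/-- Integrability of pointwise selection. -/
lemma osr_integrable_comp {m : MeasurableSpace Ω} {μ : Measure Ω}
    (g : ι → Ω → ℝ) (v : Ω → ι)
    (hg : ∀ j, Integrable (g j) μ) (hv : Measurable v) :
    Integrable (fun ω => g (v ω) ω) μ := by
  classical
  rw [osr_comp_eq_sum]
  exact integrable_finset_sum _ fun j _ =>
    (hg j).indicator (hv (measurableSet_singleton j))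

end Helpers

section Argmax
variable {ι : Type*}

/-- Sequential argmax over a list with a running candidate. -/
noncomputable def osrArgmax (v : ι → ℝ) : List ι → ι → ι
  | [], cur => cur
  | j :: t, cur => osrArgmax v t (if v cur < v j then j else cur)

lemma osrArgmax_nil (v : ι → ℝ) (cur : ι) : osrArgmax v [] cur = cur := rfl

lemma osrArgmax_cons (v : ι → ℝ) (j : ι) (t : List ι) (cur : ι) :
    osrArgmax v (j :: t) cur = osrArgmax v t (if v cur < v j then j else cur) := rfl

lemma osrArgmax_ge_cur (v : ι → ℝ) (l : List ι) :
    ∀ cur : ι, v cur ≤ v (osrArgmax v l cur) := by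
  induction l with
  | nil => intro cur; rw [osrArgmax_nil]
  | cons j t ih =>
    intro cur
    rw [osrArgmax_cons]
    refine le_trans ?_ (ih _)
    split <;> [exact le_of_lt ‹_›; exact le_rfl]

lemma osrArgmax_ge_mem (v : ι → ℝ) (l : List ι) :
    ∀ (cur j : ι), j ∈ l → v j ≤ v (osrArgmax v l cur) := by
  induction l with
  | nil => intro _ _ h; exact absurd h List.not_mem_nil
  | cons j' t ih =>
    intro cur j hj
    rw [osrArgmax_cons]
    rcases List.mem_cons.1 hj with h | h
    · subst h
      refine le_trans ?_ (osrArgmax_ge_cur v t _)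
      split <;> [exact le_rfl; exact le_of_not_gt ‹_›]
    · exact ih _ j h

lemma osrArgmax_mem (v : ι → ℝ) (l : List ι) :
    ∀ cur : ι, osrArgmax v l cur = cur ∨ osrArgmax v l cur ∈ l := by
  induction l with
  | nil => intro cur; exact Or.inl rfl
  | cons j t ih =>
    intro cur
    rw [osrArgmax_cons]
    rcases ih (if v cur < v j then j else cur) with h | h
    · rw [h]; split
      · exact Or.inr (List.mem_cons_self)
      · exact Or.inl rfl
    · exact Or.inr (List.mem_cons_of_mem _ h)

/-- Measurability of the pointwise sequential argmax. -/
lemma osrArgmax_measurable {Ω : Type*} [Fintype ι] [MeasurableSpace ι]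
    [MeasurableSingletonClass ι] {m : MeasurableSpace Ω}
    (v : ι → Ω → ℝ) (hv : ∀ j, Measurable[m] (v j)) (l : List ι) :
    ∀ cur : Ω → ι, Measurable[m] cur →
      Measurable[m] (fun ω => osrArgmax (fun j => v j ω) l (cur ω)) := by
  induction l with
  | nil => intro cur hcur; simpa [osrArgmax_nil] using hcur
  | cons j t ih =>
    intro cur hcur
    simp only [osrArgmax_cons]
    refine ih _ ?_
    have hvc : Measurable[m] (fun ω => v (cur ω) ω) :=
      osr_measurable_comp v cur hv hcur
    exact Measurable.ite (measurableSet_lt hvc (hv j)) measurable_const hcur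

end Argmax

/-- Conditional expectation commutes with measurable selection over a finite index. -/
lemma osr_condExp_select {Ω ι : Type*} [Fintype ι] [MeasurableSpace ι]
    [MeasurableSingletonClass ι] {m m0 : MeasurableSpace Ω} {μ : Measure Ω}
    (hm : m ≤ m0) [SigmaFinite (μ.trim hm)]
    (h : Ω → ℝ) (D : Ω → ι) (hD : Measurable[m] D)
    (v : ι → Ω → ℝ) (hv : ∀ j, Integrable (v j) μ)
    (heq : ∀ ω, h ω = v (D ω) ω) :
    μ[h|m] =ᵐ[μ] fun ω => (μ[v (D ω)|m]) ω := by
  classical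
  have e1 : h = ∑ j, Set.indicator {ω' | D ω' = j} (v j) := by
    funext ω
    rw [Finset.sum_apply]
    exact (heq ω).trans (congrFun (osr_comp_eq_sum v D) ω)
  have e2 : (fun ω => (μ[v (D ω)|m]) ω)
      = fun ω => ∑ j, Set.indicator {ω' | D ω' = j} (fun ω' => (μ[v j|m]) ω') ω :=
    osr_comp_eq_sum (fun j => μ[v j|m]) D
  rw [e1, e2]
  refine (condExp_finset_sum (fun j _ =>
    (hv j).indicator (hm _ (hD (measurableSet_singleton j)))) m).trans ?_
  have key : ∀ j : ι, μ[Set.indicator {ω' | D ω' = j} (v j)|m]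
      =ᵐ[μ] Set.indicator {ω' | D ω' = j} (μ[v j|m]) := fun j =>
    condExp_indicator (hv j) (hD (measurableSet_singleton j))
  filter_upwards [Filter.eventually_all.2 key] with ω hω
  simp only [Finset.sum_apply]
  exact Finset.sum_congr rfl fun j _ => hω j

/-- Integrability of a finite supremum. -/
lemma osr_integrable_sup' {Ω ι : Type*} {m0 : MeasurableSpace Ω} {μ : Measure Ω}
    (s : Finset ι) (hs : s.Nonempty) (f : ι → Ω → ℝ) (hf : ∀ j ∈ s, Integrable (f j) μ) :
    Integrable (fun ω => s.sup' hs (fun j => f j ω)) μ := by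
  classical
  revert hf
  induction hs using Finset.Nonempty.cons_induction with
  | singleton a => intro hf; simpa using hf a (by simp)
  | cons a t ha ht ih =>
    intro hf
    simp only [Finset.sup'_cons ht]
    have h1 : Integrable (f a) μ := hf a (Finset.mem_cons_self a t)
    have h2 : Integrable (fun ω => t.sup' ht fun j => f j ω) μ :=
      ih fun j hj => hf j (Finset.mem_cons_of_mem hj)
    exact h1.sup h2

/-- Integrability of a pointwise max. -/
lemma osr_integrable_max {Ω : Type*} {m0 : MeasurableSpace Ω} {μ : Measure Ω}
    (f g : Ω → ℝ) (hf : Integrable f μ) (hg : Integrable g μ) :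
    Integrable (fun ω => max (f ω) (g ω)) μ := by
  exact hf.sup hg

section OSR
variable {Ω : Type*} {m0 : MeasurableSpace Ω} {d : ℕ}

/-- Total reward of a switching strategy from time `n`. -/
def osrR (K : ℕ) (F : Fin d → ℕ → Ω → ℝ) (ξ : Fin d → Ω → ℝ)
    (Cost : Fin d → Fin d → ℕ → Ω → ℝ) (u : ℕ → Ω → Fin d) (n : ℕ) (ω : Ω) : ℝ :=
  (∑ m ∈ Finset.Ico n K, F (u m ω) m ω) + ξ (u K ω) ω
    - ∑ m ∈ Finset.Ioc n K,
        (if u m ω = u (m - 1) ω then 0 else Cost (u (m - 1) ω) (u m ω) m ω)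

lemma osrR_congr {K : ℕ} {F : Fin d → ℕ → Ω → ℝ} {ξ : Fin d → Ω → ℝ}
    {Cost : Fin d → Fin d → ℕ → Ω → ℝ} {u u' : ℕ → Ω → Fin d} {n : ℕ} {ω : Ω}
    (hagree : ∀ m, n ≤ m → u m ω = u' m ω) (hnK : n ≤ K) :
    osrR K F ξ Cost u n ω = osrR K F ξ Cost u' n ω := by
  unfold osrR
  congr 1
  · congr 1
    · exact Finset.sum_congr rfl fun m hm => by
        rw [hagree m (Finset.mem_Ico.1 hm).1]
    · rw [hagree K hnK]
  · refine Finset.sum_congr rfl fun m hm => ?_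
    have h1 := (Finset.mem_Ioc.1 hm).1
    rw [hagree m (by omega), hagree (m - 1) (by omega)]

lemma osrR_dec {K : ℕ} {F : Fin d → ℕ → Ω → ℝ} {ξ : Fin d → Ω → ℝ}
    {Cost : Fin d → Fin d → ℕ → Ω → ℝ} {u : ℕ → Ω → Fin d} {n : ℕ} {ω : Ω}
    (hn : n < K) :
    osrR K F ξ Cost u n ω = F (u n ω) n ω + osrR K F ξ Cost u (n + 1) ω
      - (if u (n + 1) ω = u n ω then 0
         else Cost (u n ω) (u (n + 1) ω) (n + 1) ω) := by
  unfold osrR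
  rw [Finset.sum_eq_sum_Ico_succ_bot hn]
  have hIoc : ∀ (g : ℕ → ℝ), ∑ m ∈ Finset.Ioc n K, g m
      = g (n + 1) + ∑ m ∈ Finset.Ioc (n + 1) K, g m := by
    intro g
    rw [← Finset.Ico_add_one_add_one_eq_Ioc, ← Finset.Ico_add_one_add_one_eq_Ioc,
      Finset.sum_eq_sum_Ico_succ_bot (by omega)]
  rw [hIoc]
  simp only [Nat.add_sub_cancel]
  ring

lemma osrR_last {K : ℕ} {F : Fin d → ℕ → Ω → ℝ} {ξ : Fin d → Ω → ℝ}
    {Cost : Fin d → Fin d → ℕ → Ω → ℝ} {u : ℕ → Ω → Fin d} {ω : Ω} {i : Fin d}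
    (hK : 1 ≤ K) (hconst : ∀ m, u m ω = i) :
    osrR K F ξ Cost u (K - 1) ω = F i (K - 1) ω + ξ i ω := by
  have h1 : K - 1 + 1 = K := by omega
  unfold osrR
  have h2 : Finset.Ico (K - 1) K = {K - 1} := by
    ext x; simp only [Finset.mem_Ico, Finset.mem_singleton]; omega
  have h3 : Finset.Ioc (K - 1) K = {K} := by
    ext x; simp only [Finset.mem_Ioc, Finset.mem_singleton]; omega
  rw [h2, h3, Finset.sum_singleton, Finset.sum_singleton]
  simp [hconst]

lemma osrR_integrable {K : ℕ} {F : Fin d → ℕ → Ω → ℝ} {ξ : Fin d → Ω → ℝ}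
    {Cost : Fin d → Fin d → ℕ → Ω → ℝ} {μ : Measure Ω}
    (hFint : ∀ i n, Integrable (F i n) μ)
    (hξint : ∀ i, Integrable (ξ i) μ)
    (hCint : ∀ i j n, Integrable (Cost i j n) μ)
    {u : ℕ → Ω → Fin d} (hum : ∀ m, Measurable (u m)) (n : ℕ) :
    Integrable (osrR K F ξ Cost u n) μ := by
  classical
  unfold osrR
  refine Integrable.sub (Integrable.add ?_ ?_) ?_
  · refine integrable_finset_sum _ fun m _ => ?_
    exact osr_integrable_comp (fun j => F j m) (u m) (fun j => hFint j m) (hum m)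
  · exact osr_integrable_comp ξ (u K) hξint (hum K)
  · refine integrable_finset_sum _ fun m _ => ?_
    have : (fun ω => if u m ω = u (m - 1) ω then 0
        else Cost (u (m - 1) ω) (u m ω) m ω)
        = fun ω => (fun p : Fin d × Fin d => fun ω' =>
            if p.2 = p.1 then 0 else Cost p.1 p.2 m ω') (u (m - 1) ω, u m ω) ω := rfl
    rw [this]
    refine osr_integrable_comp (μ := μ)
      (fun p ω' => if p.2 = p.1 then 0 else Cost p.1 p.2 m ω')
      (fun ω => (u (m - 1) ω, u m ω)) (fun p => ?_) ((hum (m - 1)).prodMk (hum m))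
    by_cases h : p.2 = p.1
    · simpa [h] using (integrable_zero Ω ℝ μ)
    · simpa [h] using hCint p.1 p.2 m

end OSR

/-- Replacing an integrand by its conditional expectation w.r.t. an intermediate σ-algebra. -/
lemma osr_condExp_proj {Ω : Type*} {m m' m0 : MeasurableSpace Ω} {μ : Measure Ω}
    (hmm' : m ≤ m') (hm' : m' ≤ m0) [SigmaFinite (μ.trim hm')]
    (f g g' c : Ω → ℝ) (hf : Integrable f μ) (hg : Integrable g μ)
    (hg' : Integrable g' μ) (hc : Integrable c μ)
    (hproj : μ[g|m'] =ᵐ[μ] μ[g'|m']) :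
    μ[fun ω => f ω + (g ω - c ω)|m] =ᵐ[μ] μ[fun ω => f ω + (g' ω - c ω)|m] := by
  have key : ∀ h : Ω → ℝ, Integrable h μ →
      μ[fun ω => f ω + (h ω - c ω)|m] =ᵐ[μ] μ[f|m] + (μ[h|m] - μ[c|m]) := by
    intro h hh
    have e : (fun ω => f ω + (h ω - c ω)) = f + (h - c) := rfl
    rw [e]
    exact (condExp_add hf (hh.sub hc) m).trans
      (Filter.EventuallyEq.rfl.add (condExp_sub hh hc m))
  have hgg' : μ[g|m] =ᵐ[μ] μ[g'|m] := by
    have h1 := condExp_condExp_of_le (f := g) hmm' hm' (μ := μ)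
    have h2 := condExp_condExp_of_le (f := g') hmm' hm' (μ := μ)
    exact h1.symm.trans ((condExp_congr_ae hproj).trans h2)
  exact (key g hg).trans
    ((Filter.EventuallyEq.rfl.add (hgg'.sub Filter.EventuallyEq.rfl)).trans
      (key g' hg').symm)

/-- Discrete optimal switching representation: if `(Y^i_n)` solves the coupled backward
recursion `Y^i_n = E[F^i_n + max{M^i_{n+1}, Y^i_{n+1}} 1_{n+1<K} + ξ^i 1_{n+1=K} | G_n]`
with `M^i_m = max_{j ≠ i}(Y^j_m − C^{ij}_m)`, then `Y^i_n` is the essential supremum,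
over admissible switching strategies starting from regime `i` at time `n` (switching
only at times `n+1,…,K-1`), of the conditional expected total reward
`∑_m F^{u_m}_m + ξ^{u_K} − ∑ switching costs`; the supremum is attained. -/
theorem discrete_optimal_switching_representation
    {Ω : Type*} {m0 : MeasurableSpace Ω} (μ : Measure Ω) [IsProbabilityMeasure μ]
    (𝒢 : Filtration ℕ m0) (K d : ℕ) (hd : 2 ≤ d) (hK : 1 ≤ K)
    (hne : ∀ i : Fin d, (Finset.univ.erase i).Nonempty)
    (F : Fin d → ℕ → Ω → ℝ)
    (hFm : ∀ i n, StronglyMeasurable[𝒢 (n + 1)] (F i n))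
    (hFint : ∀ i n, Integrable (F i n) μ)
    (ξ : Fin d → Ω → ℝ)
    (hξm : ∀ i, StronglyMeasurable[𝒢 K] (ξ i)) (hξint : ∀ i, Integrable (ξ i) μ)
    (c : ℝ) (hc : 0 < c)
    (Cost : Fin d → Fin d → ℕ → Ω → ℝ)
    (hCm : ∀ i j n, StronglyMeasurable[𝒢 n] (Cost i j n))
    (hCb : ∃ Cb : ℝ, ∀ i j n ω, |Cost i j n ω| ≤ Cb)
    (hCdiag : ∀ i n ω, Cost i i n ω = 0)
    (hCpos : ∀ i j n ω, i ≠ j → c ≤ Cost i j n ω)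
    (hCtri : ∀ i j l n ω, i ≠ j → j ≠ l → i ≠ l →
      c ≤ Cost i j n ω + Cost j l n ω - Cost i l n ω)
    (Y : Fin d → ℕ → Ω → ℝ)
    (hYm : ∀ i n, StronglyMeasurable[𝒢 n] (Y i n))
    (hYint : ∀ i n, Integrable (Y i n) μ)
    (hYrec : ∀ i : Fin d, ∀ n < K, Y i n =ᵐ[μ]
      μ[fun ω => F i n ω
          + (if n + 1 < K then
              max ((Finset.univ.erase i).sup' (hne i)
                    (fun j => Y j (n + 1) ω - Cost i j (n + 1) ω))
                  (Y i (n + 1) ω)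
            else 0)
          + (if n + 1 = K then ξ i ω else 0)|𝒢 n]) :
    ∀ (i : Fin d) (n : ℕ), n < K →
      (∀ u : ℕ → Ω → Fin d,
          (∀ m, Measurable[𝒢 m] (u m)) →
          (∀ ω, ∀ m ≤ n, u m ω = i) →
          (∀ ω, ∀ m, K - 1 ≤ m → u m ω = u (K - 1) ω) →
          (μ[fun ω => (∑ m ∈ Finset.Ico n K, F (u m ω) m ω) + ξ (u K ω) ω
              - ∑ m ∈ Finset.Ioc n K,
                  (if u m ω = u (m - 1) ω then 0 else Cost (u (m - 1) ω) (u m ω) m ω)|𝒢 n])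
            ≤ᵐ[μ] Y i n)
      ∧ ∃ u : ℕ → Ω → Fin d,
          (∀ m, Measurable[𝒢 m] (u m)) ∧
          (∀ ω, ∀ m ≤ n, u m ω = i) ∧
          (∀ ω, ∀ m, K - 1 ≤ m → u m ω = u (K - 1) ω) ∧
          Y i n =ᵐ[μ]
            μ[fun ω => (∑ m ∈ Finset.Ico n K, F (u m ω) m ω) + ξ (u K ω) ω
              - ∑ m ∈ Finset.Ioc n K,
                  (if u m ω = u (m - 1) ω then 0 else Cost (u (m - 1) ω) (u m ω) m ω)|𝒢 n] := by
  classical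
  obtain ⟨Cb, hCbb⟩ := hCb
  have hCint : ∀ i j n', Integrable (Cost i j n') μ := fun i j n' =>
    Integrable.mono' (integrable_const Cb)
      (((hCm i j n').mono (𝒢.le n')).aestronglyMeasurable)
      (Filter.Eventually.of_forall fun ω => by
        simpa [Real.norm_eq_abs] using hCbb i j n' ω)
  have hRint : ∀ u : ℕ → Ω → Fin d, (∀ m, Measurable[𝒢 m] (u m)) → ∀ n',
      Integrable (osrR K F ξ Cost u n') μ := fun u hum n' =>
    osrR_integrable hFint hξint hCint (fun m => (hum m).mono (𝒢.le m) le_rfl) n'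
  have hmain : ∀ N : ℕ, ∀ n : ℕ, K - n ≤ N → ∀ i : Fin d, n < K →
      ((∀ u : ℕ → Ω → Fin d, (∀ m, Measurable[𝒢 m] (u m)) →
          (∀ ω, ∀ m ≤ n, u m ω = i) →
          (∀ ω, ∀ m, K - 1 ≤ m → u m ω = u (K - 1) ω) →
          μ[osrR K F ξ Cost u n|𝒢 n] ≤ᵐ[μ] Y i n)
        ∧ ∃ u : ℕ → Ω → Fin d, (∀ m, Measurable[𝒢 m] (u m)) ∧
            (∀ ω, ∀ m ≤ n, u m ω = i) ∧
            (∀ ω, ∀ m, K - 1 ≤ m → u m ω = u (K - 1) ω) ∧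
            Y i n =ᵐ[μ] μ[osrR K F ξ Cost u n|𝒢 n]) := by
    intro N
    induction N with
    | zero => intro n hn i hnK; omega
    | succ N ihN =>
      intro n hn i hnK
      by_cases hsucc : n + 1 = K
      · -- base case : n = K - 1
        have hYn : Y i n =ᵐ[μ] μ[(fun ω => F i n ω + ξ i ω)|𝒢 n] := by
          refine (hYrec i n hnK).trans
            (condExp_congr_ae (Filter.Eventually.of_forall fun ω => ?_))
          beta_reduce
          rw [if_neg (show ¬ n + 1 < K by omega), if_pos hsucc]
          ring
        have hnK1 : n = K - 1 := by omega
        constructor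
        · intro u hum hu0 hustat
          have hall : ∀ ω m, u m ω = i := by
            intro ω m
            rcases le_or_gt m n with h | h
            · exact hu0 ω m h
            · rw [hustat ω m (by omega), hu0 ω (K - 1) (by omega)]
          have hRe : osrR K F ξ Cost u n = fun ω => F i n ω + ξ i ω := by
            funext ω
            rw [hnK1]
            exact osrR_last hK fun m => hall ω m
          rw [hRe]
          exact hYn.symm.le
        · refine ⟨fun _ _ => i, fun m => measurable_const,
            fun ω m _ => rfl, fun ω m _ => rfl, ?_⟩
          have hRe : osrR K F ξ Cost (fun _ _ => i) n = fun ω => F i n ω + ξ i ω := by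
            funext ω
            rw [hnK1]
            exact osrR_last hK fun m => rfl
          rw [hRe]
          exact hYn
      · -- inductive case : n + 1 < K
        have hn1K : n + 1 < K := by omega
        have IH := fun j : Fin d => ihN (n + 1) (by omega) j hn1K
        set MX : Ω → ℝ := fun ω => (Finset.univ.erase i).sup' (hne i)
          (fun j => Y j (n + 1) ω - Cost i j (n + 1) ω) with hMX
        have hYn : Y i n =ᵐ[μ]
            μ[(fun ω => F i n ω + max (MX ω) (Y i (n + 1) ω))|𝒢 n] := by
          refine (hYrec i n hnK).trans
            (condExp_congr_ae (Filter.Eventually.of_forall fun ω => ?_))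
          beta_reduce
          rw [if_pos hn1K, if_neg hsucc]
          simp only [hMX]
          ring
        have hmxint : Integrable (fun ω => max (MX ω) (Y i (n + 1) ω)) μ :=
          osr_integrable_max _ _
            (osr_integrable_sup' _ (hne i) _
              (fun j _ => (hYint j (n + 1)).sub (hCint i j (n + 1))))
            (hYint i (n + 1))
        have hle_mx : ∀ (ω : Ω) (j : Fin d),
            Y j (n + 1) ω - Cost i j (n + 1) ω ≤ max (MX ω) (Y i (n + 1) ω) := by
          intro ω j
          by_cases hj : j = i
          · subst hj
            rw [hCdiag, sub_zero]
            exact le_max_right _ _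
          · exact le_trans
              (Finset.le_sup' (fun j => Y j (n + 1) ω - Cost i j (n + 1) ω)
                (Finset.mem_erase.2 ⟨hj, Finset.mem_univ j⟩))
              (le_max_left _ _)
        -- the key conditional-expectation step, common to both directions
        have keystep : ∀ u : ℕ → Ω → Fin d, (∀ m, Measurable[𝒢 m] (u m)) →
            (∀ ω, ∀ m ≤ n, u m ω = i) →
            ∀ w : Fin d → ℕ → Ω → Fin d, (∀ j m, Measurable[𝒢 m] (w j m)) →
            (∀ ω m, n + 1 ≤ m → u m ω = w (u (n + 1) ω) m ω) →
            μ[osrR K F ξ Cost u n|𝒢 n] =ᵐ[μ]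
              μ[fun ω => F i n ω
                + (condExp (𝒢 (n + 1)) μ (osrR K F ξ Cost (w (u (n + 1) ω)) (n + 1)) ω
                  - Cost i (u (n + 1) ω) (n + 1) ω)|𝒢 n] := by
          intro u hum hu0 w hwm hmatch
          have humM : ∀ m, Measurable (u m) := fun m => (hum m).mono (𝒢.le m) le_rfl
          have hg'm : StronglyMeasurable[𝒢 (n + 1)]
              (fun ω => condExp (𝒢 (n + 1)) μ (osrR K F ξ Cost (w (u (n + 1) ω)) (n + 1)) ω) := by
            refine Measurable.stronglyMeasurable ?_
            exact osr_measurable_comp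
              (fun j => μ[osrR K F ξ Cost (w j) (n + 1)|𝒢 (n + 1)]) (u (n + 1))
              (fun j => stronglyMeasurable_condExp.measurable) (hum (n + 1))
          have hg'int : Integrable
              (fun ω => condExp (𝒢 (n + 1)) μ (osrR K F ξ Cost (w (u (n + 1) ω)) (n + 1)) ω) μ :=
            osr_integrable_comp
              (fun j => μ[osrR K F ξ Cost (w j) (n + 1)|𝒢 (n + 1)]) (u (n + 1))
              (fun j => integrable_condExp) (humM (n + 1))
          have hsel : μ[osrR K F ξ Cost u (n + 1)|𝒢 (n + 1)] =ᵐ[μ]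
              fun ω => condExp (𝒢 (n + 1)) μ (osrR K F ξ Cost (w (u (n + 1) ω)) (n + 1)) ω :=
            osr_condExp_select (𝒢.le (n + 1)) _ (u (n + 1)) (hum (n + 1))
              (fun j => osrR K F ξ Cost (w j) (n + 1))
              (fun j => hRint (w j) (hwm j) (n + 1))
              (fun ω => osrR_congr (fun m hm => hmatch ω m hm) (by omega))
          have hproj : μ[osrR K F ξ Cost u (n + 1)|𝒢 (n + 1)] =ᵐ[μ]
              condExp (𝒢 (n + 1)) μ
                (fun ω => condExp (𝒢 (n + 1)) μ
                  (osrR K F ξ Cost (w (u (n + 1) ω)) (n + 1)) ω) := by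
            rw [condExp_of_stronglyMeasurable (𝒢.le (n + 1)) hg'm hg'int]
            exact hsel
          have hcostint : Integrable (fun ω => Cost i (u (n + 1) ω) (n + 1) ω) μ :=
            osr_integrable_comp (fun j => Cost i j (n + 1)) (u (n + 1))
              (fun j => hCint i j (n + 1)) (humM (n + 1))
          have hdec : osrR K F ξ Cost u n = fun ω => F i n ω
              + (osrR K F ξ Cost u (n + 1) ω - Cost i (u (n + 1) ω) (n + 1) ω) := by
            funext ω
            rw [osrR_dec hnK, hu0 ω n le_rfl]
            by_cases h : u (n + 1) ω = i
            · rw [if_pos h, h, hCdiag]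
              ring
            · rw [if_neg h]
              ring
          rw [hdec]
          exact osr_condExp_proj (𝒢.mono (Nat.le_succ n)) (𝒢.le (n + 1))
            (F i n) _ _ _ (hFint i n) (hRint u hum (n + 1)) hg'int hcostint hproj
        constructor
        · -- upper bound
          intro u hum hu0 hustat
          set w : Fin d → ℕ → Ω → Fin d := fun j m ω =>
            if m ≤ n + 1 then j else if u (n + 1) ω = j then u m ω else j with hwdef
          have hwstart : ∀ (j : Fin d) (ω : Ω) (m : ℕ), m ≤ n + 1 → w j m ω = j := by
            intro j ω m hm
            simp only [hwdef]
            rw [if_pos hm]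
          have hwm : ∀ j m, Measurable[𝒢 m] (w j m) := by
            intro j m
            by_cases hm : m ≤ n + 1
            · have : w j m = fun _ => j := funext fun ω => hwstart j ω m hm
              rw [this]
              exact measurable_const
            · simp only [hwdef, hm, if_false]
              have h1 : Measurable[𝒢 m] (u (n + 1)) :=
                (hum (n + 1)).mono (𝒢.mono (by omega)) le_rfl
              exact Measurable.ite (h1 (measurableSet_singleton j)) (hum m)
                measurable_const
          have hwstat : ∀ (j : Fin d) (ω : Ω) (m : ℕ), K - 1 ≤ m →
              w j m ω = w j (K - 1) ω := by
            intro j ω m hm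
            by_cases hKn : K - 1 = n + 1
            · rw [hwstart j ω (K - 1) (by omega)]
              by_cases hmn : m ≤ n + 1
              · exact hwstart j ω m hmn
              · simp only [hwdef]
                rw [if_neg hmn]
                by_cases hj : u (n + 1) ω = j
                · rw [if_pos hj, hustat ω m (by omega), hKn]
                  exact hj
                · rw [if_neg hj]
            · have hm' : ¬ m ≤ n + 1 := by omega
              simp only [hwdef]
              rw [if_neg hm', if_neg (by omega : ¬ K - 1 ≤ n + 1)]
              by_cases hj : u (n + 1) ω = j
              · rw [if_pos hj, if_pos hj, hustat ω m hm]
              · rw [if_neg hj, if_neg hj]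
          have hmatch : ∀ (ω : Ω) (m : ℕ), n + 1 ≤ m →
              u m ω = w (u (n + 1) ω) m ω := by
            intro ω m hm
            rcases eq_or_lt_of_le hm with h | h
            · rw [← h]
              exact (hwstart _ ω (n + 1) le_rfl).symm
            · simp only [hwdef]
              rw [if_neg (by omega : ¬ m ≤ n + 1)]
              simp
          have hub : ∀ j : Fin d,
              μ[osrR K F ξ Cost (w j) (n + 1)|𝒢 (n + 1)] ≤ᵐ[μ] Y j (n + 1) := fun j =>
            (IH j).1 (w j) (hwm j) (fun ω m hm => hwstart j ω m hm)
              (fun ω m hm => hwstat j ω m hm)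
          have humM : ∀ m, Measurable (u m) := fun m => (hum m).mono (𝒢.le m) le_rfl
          have hg'int : Integrable
              (fun ω => condExp (𝒢 (n + 1)) μ (osrR K F ξ Cost (w (u (n + 1) ω)) (n + 1)) ω) μ :=
            osr_integrable_comp
              (fun j => μ[osrR K F ξ Cost (w j) (n + 1)|𝒢 (n + 1)]) (u (n + 1))
              (fun j => integrable_condExp) (humM (n + 1))
          have hcostint : Integrable (fun ω => Cost i (u (n + 1) ω) (n + 1) ω) μ :=
            osr_integrable_comp (fun j => Cost i j (n + 1)) (u (n + 1))
              (fun j => hCint i j (n + 1)) (humM (n + 1))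
          have hptw : (fun ω => F i n ω
              + (condExp (𝒢 (n + 1)) μ (osrR K F ξ Cost (w (u (n + 1) ω)) (n + 1)) ω
                - Cost i (u (n + 1) ω) (n + 1) ω))
              ≤ᵐ[μ] fun ω => F i n ω + max (MX ω) (Y i (n + 1) ω) := by
            have hall := ae_all_iff.2 hub
            filter_upwards [hall] with ω hω
            have h1 : condExp (𝒢 (n + 1)) μ (osrR K F ξ Cost (w (u (n + 1) ω)) (n + 1)) ω
                ≤ Y (u (n + 1) ω) (n + 1) ω := hω (u (n + 1) ω)
            have h2 := hle_mx ω (u (n + 1) ω)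
            have := sub_le_sub_right h1 (Cost i (u (n + 1) ω) (n + 1) ω)
            exact add_le_add_right (this.trans h2) _
          have hintL : Integrable (fun ω => F i n ω
              + (condExp (𝒢 (n + 1)) μ (osrR K F ξ Cost (w (u (n + 1) ω)) (n + 1)) ω
                - Cost i (u (n + 1) ω) (n + 1) ω)) μ :=
            (hFint i n).add (hg'int.sub hcostint)
          have hintR : Integrable (fun ω => F i n ω + max (MX ω) (Y i (n + 1) ω)) μ :=
            (hFint i n).add hmxint
          have hmono := condExp_mono (m := 𝒢 n) hintL hintR hptw
          exact ((keystep u hum hu0 w hwm hmatch).trans_le hmono).trans hYn.symm.le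
        · -- existence of optimal strategy
          have hEXj := fun j : Fin d => (IH j).2
          choose w hw1 hw2 hw3 hw4 using hEXj
          set D : Ω → Fin d := fun ω =>
            osrArgmax (fun j => Y j (n + 1) ω - Cost i j (n + 1) ω)
              (Finset.univ.erase i).toList i with hDdef
          have hDm : Measurable[𝒢 (n + 1)] D :=
            osrArgmax_measurable (fun j ω => Y j (n + 1) ω - Cost i j (n + 1) ω)
              (fun j => ((hYm j (n + 1)).measurable).sub ((hCm i j (n + 1)).measurable))
              (Finset.univ.erase i).toList (fun _ => i) measurable_const
          set uo : ℕ → Ω → Fin d := fun m ω => if m ≤ n then i else w (D ω) m ω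
            with huodef
          have huom : ∀ m, Measurable[𝒢 m] (uo m) := by
            intro m
            by_cases hm : m ≤ n
            · have : uo m = fun _ => i := funext fun ω => by
                simp only [huodef]; rw [if_pos hm]
              rw [this]
              exact measurable_const
            · simp only [huodef, hm, if_false]
              exact osr_measurable_comp (fun j => w j m) D (fun j => hw1 j m)
                (hDm.mono (𝒢.mono (by omega)) le_rfl)
          have huo0 : ∀ ω, ∀ m ≤ n, uo m ω = i := by
            intro ω m hm
            simp only [huodef]
            rw [if_pos hm]
          have huostat : ∀ ω, ∀ m, K - 1 ≤ m → uo m ω = uo (K - 1) ω := by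
            intro ω m hm
            simp only [huodef]
            rw [if_neg (by omega : ¬ m ≤ n), if_neg (by omega : ¬ K - 1 ≤ n)]
            exact hw3 (D ω) ω m hm
          have huo1 : ∀ ω, uo (n + 1) ω = D ω := by
            intro ω
            simp only [huodef]
            rw [if_neg (by omega)]
            exact hw2 (D ω) ω (n + 1) le_rfl
          have hmatch : ∀ (ω : Ω) (m : ℕ), n + 1 ≤ m →
              uo m ω = w (uo (n + 1) ω) m ω := by
            intro ω m hm
            rw [huo1 ω]
            simp only [huodef]
            rw [if_neg (by omega)]
          refine ⟨uo, huom, huo0, huostat, ?_⟩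
          have hks := keystep uo huom huo0 w hw1 hmatch
          have hae : (fun ω => F i n ω
              + (condExp (𝒢 (n + 1)) μ (osrR K F ξ Cost (w (uo (n + 1) ω)) (n + 1)) ω
                - Cost i (uo (n + 1) ω) (n + 1) ω))
              =ᵐ[μ] fun ω => F i n ω + max (MX ω) (Y i (n + 1) ω) := by
            have hall := ae_all_iff.2 fun j => hw4 j
            filter_upwards [hall] with ω hω
            rw [huo1 ω, ← hω (D ω)]
            congr 1
            have hgle : Y (D ω) (n + 1) ω - Cost i (D ω) (n + 1) ω
                ≤ max (MX ω) (Y i (n + 1) ω) := hle_mx ω (D ω)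
            have hge : max (MX ω) (Y i (n + 1) ω)
                ≤ Y (D ω) (n + 1) ω - Cost i (D ω) (n + 1) ω := by
              apply max_le
              · refine Finset.sup'_le _ _ fun j hj => ?_
                exact osrArgmax_ge_mem
                  (fun j => Y j (n + 1) ω - Cost i j (n + 1) ω)
                  (Finset.univ.erase i).toList i j (Finset.mem_toList.2 hj)
              · have h0 := osrArgmax_ge_cur
                  (fun j => Y j (n + 1) ω - Cost i j (n + 1) ω)
                  (Finset.univ.erase i).toList i
                rw [hCdiag, sub_zero] at h0
                exact h0
            linarith
          exact hYn.trans ((condExp_congr_ae hae.symm).trans hks.symm)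
  intro i n hn
  obtain ⟨hub, u, h1, h2, h3, h4⟩ := hmain (K - n) n le_rfl i hn
  exact ⟨fun u' hu' h0' hs' => hub u' hu' h0' hs', u, h1, h2, h3, h4⟩
end
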